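/- arXiv:1001.1386 — 3 statements merged into one kernel-verified Lean document; each statement's English description precedes it below -/
import Mathlib

section
/- For all positive integers c, ℓ and every integer L with 1 ≤ L ≤ 2^ℓ the following holds. For every set S ⊆ 𝔽₂^ℓ with |S| = L, there exist a vector w ∈ 𝔽₂^ℓ, an integer d with d ≥ (1/c)·log₂(L/2) − (1 − 1/c)·log₂ ℓ, and vectors v₁, …, v_d ∈ S such that the sequence v₁ + w, v₂ + w, …, v_d + w is a c-increasing chain of length d. -/
/-- The support of a vector `v ∈ 𝔽₂^ℓ`: the set of coordinates where `v` is nonzero. -/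
def suppF2 {ℓ : ℕ} (v : Fin ℓ → ZMod 2) : Finset (Fin ℓ) :=
  Finset.univ.filter (fun i => v i ≠ 0)

/-- A sequence `v 0, …, v (d-1)` of vectors in `𝔽₂^ℓ` is a `c`-increasing chain if for
every `j`, `|supp(v j) \ (supp(v 0) ∪ ⋯ ∪ supp(v (j-1)))| ≥ c`. -/
def IncreasingChainF2 {ℓ : ℕ} (c : ℕ) {d : ℕ} (v : Fin d → (Fin ℓ → ZMod 2)) : Prop :=
  ∀ j : Fin d,
    c ≤ ((suppF2 (v j)) \ ((Finset.Iio j).biUnion (fun i => suppF2 (v i)))).card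

namespace IncChainAux

open Finset

variable {ℓ : ℕ}

lemma zmod2_eq_zero_or_one : ∀ a : ZMod 2, a = 0 ∨ a = 1 := by decide

lemma mem_suppF2 {z : Fin ℓ → ZMod 2} {m : Fin ℓ} : m ∈ suppF2 z ↔ z m ≠ 0 := by
  simp [suppF2]

lemma suppF2_injective : Function.Injective (suppF2 (ℓ := ℓ)) := by
  intro x y h
  funext m
  have hm : (x m ≠ 0) ↔ (y m ≠ 0) := by
    constructor
    · intro hx; exact mem_suppF2.1 (h ▸ mem_suppF2.2 hx)
    · intro hy; exact mem_suppF2.1 (h.symm ▸ mem_suppF2.2 hy)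
  rcases zmod2_eq_zero_or_one (x m) with h1 | h1 <;>
    rcases zmod2_eq_zero_or_one (y m) with h2 | h2 <;>
      simp [h1, h2] at hm ⊢

lemma exists_shattered (c : ℕ) (S : Finset (Fin ℓ → ZMod 2))
    (h : ∑ i ∈ Finset.range c, ℓ.choose i < S.card) :
    ∃ I : Finset (Fin ℓ), I.card = c ∧ ∀ J ⊆ I, ∃ z ∈ S, suppF2 z ∩ I = J := by
  classical
  set 𝒜 := S.image suppF2 with h𝒜
  have hcard : 𝒜.card = S.card := card_image_of_injective _ suppF2_injective
  have hbig : ∑ i ∈ Finset.range c, ℓ.choose i < 𝒜.shatterer.card :=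
    lt_of_lt_of_le (by omega) (card_le_card_shatterer 𝒜)
  have hex : ∃ s ∈ 𝒜.shatterer, c ≤ s.card := by
    by_contra hno
    push_neg at hno
    have hsub : 𝒜.shatterer ⊆ (Finset.range c).biUnion
        (fun i => Finset.powersetCard i Finset.univ) := by
      intro s hs
      simp only [mem_biUnion, mem_range, mem_powersetCard_univ]
      exact ⟨s.card, hno s hs, rfl⟩
    have hle : 𝒜.shatterer.card ≤ ∑ i ∈ Finset.range c, ℓ.choose i := by
      calc 𝒜.shatterer.card
          ≤ ((Finset.range c).biUnion (fun i => Finset.powersetCard i Finset.univ)).card :=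
            card_le_card hsub
        _ ≤ ∑ i ∈ Finset.range c,
              (Finset.powersetCard i (Finset.univ : Finset (Fin ℓ))).card := card_biUnion_le
        _ = ∑ i ∈ Finset.range c, ℓ.choose i := by
            refine Finset.sum_congr rfl fun i _ => ?_
            rw [card_powersetCard, card_univ, Fintype.card_fin]
    omega
  obtain ⟨s, hs, hsc⟩ := hex
  obtain ⟨I, hIs, hIc⟩ := exists_subset_card_eq hsc
  have hshat : 𝒜.Shatters I := (mem_shatterer.1 hs).mono_right hIs
  refine ⟨I, hIc, fun J hJ => ?_⟩
  obtain ⟨u, hu, huJ⟩ := hshat hJ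
  obtain ⟨z, hzS, rfl⟩ := mem_image.1 hu
  exact ⟨z, hzS, by rw [Finset.inter_comm]; exact huJ⟩

lemma chain_snoc {c d : ℕ} (f : Fin d → (Fin ℓ → ZMod 2)) (g : Fin ℓ → ZMod 2)
    (hf : IncreasingChainF2 c f)
    (hg : c ≤ (suppF2 g \ Finset.univ.biUnion (fun i => suppF2 (f i))).card) :
    IncreasingChainF2 c (Fin.snoc f g) := by
  intro j
  induction j using Fin.lastCases with
  | last =>
      rw [Fin.snoc_last]
      have he : (Finset.Iio (Fin.last d)).biUnion (fun i => suppF2 ((Fin.snoc f g : Fin (d+1) → Fin ℓ → ZMod 2) i))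
          = Finset.univ.biUnion (fun i => suppF2 (f i)) := by
        ext m
        simp only [Finset.mem_biUnion, Finset.mem_Iio, Finset.mem_univ, true_and]
        constructor
        · rintro ⟨i, hi, hm⟩
          have hiv : (i : ℕ) < d := by
            simpa [Fin.lt_iff_val_lt_val] using hi
          refine ⟨⟨i, hiv⟩, ?_⟩
          have hie : i = Fin.castSucc ⟨i, hiv⟩ := by
            apply Fin.ext; rfl
          rw [hie, Fin.snoc_castSucc] at hm; exact hm
        · rintro ⟨i, hm⟩
          exact ⟨Fin.castSucc i, Fin.castSucc_lt_last i, by rwa [Fin.snoc_castSucc]⟩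
      rw [he]; exact hg
  | cast j' =>
      rw [Fin.snoc_castSucc]
      have he : (Finset.Iio (Fin.castSucc j')).biUnion (fun i => suppF2 ((Fin.snoc f g : Fin (d+1) → Fin ℓ → ZMod 2) i))
          = (Finset.Iio j').biUnion (fun i => suppF2 (f i)) := by
        ext m
        simp only [Finset.mem_biUnion, Finset.mem_Iio]
        constructor
        · rintro ⟨i, hi, hm⟩
          have hiv : (i : ℕ) < (j' : ℕ) := by
            simpa [Fin.lt_iff_val_lt_val] using hi
          have hid : (i : ℕ) < d := lt_trans hiv j'.isLt
          refine ⟨⟨i, hid⟩, Fin.lt_iff_val_lt_val.2 hiv, ?_⟩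
          have hie : i = Fin.castSucc ⟨i, hid⟩ := by apply Fin.ext; rfl
          rw [hie, Fin.snoc_castSucc] at hm; exact hm
        · rintro ⟨i, hi, hm⟩
          refine ⟨Fin.castSucc i, Fin.castSucc_lt_castSucc_iff.2 hi, ?_⟩
          rwa [Fin.snoc_castSucc]
      rw [he]; exact hf j'

lemma main_chain (c : ℕ) (hc : 0 < c) :
    ∀ n (S : Finset (Fin ℓ → ZMod 2)), S.card ≤ n →
    ∃ (d : ℕ) (w : Fin ℓ → ZMod 2) (v : Fin d → (Fin ℓ → ZMod 2)),
      (∀ j, v j ∈ S) ∧ IncreasingChainF2 c (fun j => v j + w) ∧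
      S.card ≤ 2 ^ (c * d) * (∑ i ∈ Finset.range c, ℓ.choose i) ∧
      (∀ m : Fin ℓ, ∀ x ∈ S, (∀ y ∈ S, y m = x m) → w m = x m) := by
  intro n
  induction n with
  | zero =>
      intro S hS
      have hS0 : S = ∅ := card_eq_zero.1 (Nat.le_zero.1 hS)
      subst hS0
      exact ⟨0, 0, Fin.elim0, fun j => j.elim0, fun j => j.elim0, by simp, by simp⟩
  | succ n ih =>
      intro S hScard
      by_cases hsmall : S.card ≤ ∑ i ∈ Finset.range c, ℓ.choose i
      · rcases S.eq_empty_or_nonempty with rfl | ⟨u, hu⟩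
        · exact ⟨0, 0, Fin.elim0, fun j => j.elim0, fun j => j.elim0, by simp, by simp⟩
        · refine ⟨0, u, Fin.elim0, fun j => j.elim0, fun j => j.elim0, by simpa using hsmall, ?_⟩
          intro m x hx hconst
          exact hconst u hu
      · push_neg at hsmall
        obtain ⟨I, hIcard, hIshat⟩ := exists_shattered c S hsmall
        classical
        have hsum : S.card = ∑ K ∈ I.powerset, (S.filter (fun z => suppF2 z ∩ I = K)).card :=
          card_eq_sum_card_fiberwise (fun z _ => mem_powerset.2 inter_subset_right)
        obtain ⟨K, hKmem, hKmax⟩ := exists_max_image I.powerset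
          (fun K => (S.filter (fun z => suppF2 z ∩ I = K)).card)
          ⟨∅, mem_powerset.2 (empty_subset I)⟩
        set F := S.filter (fun z => suppF2 z ∩ I = K) with hFdef
        have hfib : S.card ≤ 2 ^ c * F.card := by
          calc S.card = ∑ K' ∈ I.powerset, (S.filter (fun z => suppF2 z ∩ I = K')).card := hsum
            _ ≤ I.powerset.card • F.card := sum_le_card_nsmul _ _ _ (fun K' hK' => hKmax K' hK')
            _ = 2 ^ c * F.card := by rw [card_powerset, hIcard, smul_eq_mul]
        obtain ⟨y, hyS, hykey⟩ := hIshat (I \ K) sdiff_subset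
        have hInonempty : I.Nonempty := card_pos.1 (by omega)
        have hyF : y ∉ F := by
          intro hyF
          have h1 : suppF2 y ∩ I = K := (mem_filter.1 hyF).2
          have h2 : I \ K = K := by rw [← hykey, h1]
          obtain ⟨m, hm⟩ := hInonempty
          by_cases hmK : m ∈ K
          · have hmm : m ∈ I \ K := by rw [h2]; exact hmK
            exact (mem_sdiff.1 hmm).2 hmK
          · have hmm : m ∈ K := by rw [← h2]; exact mem_sdiff.2 ⟨hm, hmK⟩
            exact hmK hmm
        have hFsub : F ⊆ S := filter_subset _ _
        have hFlt : F.card < S.card := by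
          apply card_lt_card
          rw [Finset.ssubset_def]
          exact ⟨hFsub, fun hsub => hyF (hsub hyS)⟩
        obtain ⟨d', w, v', hmem, hchain, hcardF, hagree⟩ := ih F (by omega)
        have hFpos : 0 < F.card := by
          rcases Nat.eq_zero_or_pos F.card with h0 | h0
          · rw [h0, Nat.mul_zero] at hfib
            have hBpos : 0 < ∑ i ∈ Finset.range c, ℓ.choose i := by
              calc 0 < ℓ.choose 0 := by simp
                _ ≤ ∑ i ∈ Finset.range c, ℓ.choose i :=
                  Finset.single_le_sum (f := fun i => ℓ.choose i) (fun i _ => Nat.zero_le _)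
                    (Finset.mem_range.2 hc)
            omega
          · exact h0
        obtain ⟨x₀, hx₀⟩ := card_pos.1 hFpos
        have hFval : ∀ z ∈ F, ∀ m ∈ I, z m = (if m ∈ K then 1 else 0) := by
          intro z hz m hm
          have h1 : suppF2 z ∩ I = K := (mem_filter.1 hz).2
          by_cases hmK : m ∈ K
          · have hs : m ∈ suppF2 z := by
              have : m ∈ suppF2 z ∩ I := by rw [h1]; exact hmK
              exact (mem_inter.1 this).1
            rw [mem_suppF2] at hs
            rcases zmod2_eq_zero_or_one (z m) with h | h
            · exact absurd h hs
            · rw [h, if_pos hmK]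
          · have hs : m ∉ suppF2 z := by
              intro hs
              have : m ∈ suppF2 z ∩ I := mem_inter.2 ⟨hs, hm⟩
              rw [h1] at this
              exact hmK this
            rw [mem_suppF2, not_not] at hs
            rw [hs, if_neg hmK]
        have hwm : ∀ m ∈ I, w m = (if m ∈ K then 1 else 0) := by
          intro m hm
          have h := hagree m x₀ hx₀ (fun y' hy' => by
            rw [hFval y' hy' m hm, hFval x₀ hx₀ m hm])
          rw [h, hFval x₀ hx₀ m hm]
        have hyval : ∀ m ∈ I, y m = (if m ∈ K then 0 else 1) := by
          intro m hm
          by_cases hmK : m ∈ K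
          · have hs : m ∉ suppF2 y := by
              intro hs
              have : m ∈ suppF2 y ∩ I := mem_inter.2 ⟨hs, hm⟩
              rw [hykey] at this
              exact (mem_sdiff.1 this).2 hmK
            rw [mem_suppF2, not_not] at hs
            rw [hs, if_pos hmK]
          · have hs : m ∈ suppF2 y := by
              have : m ∈ suppF2 y ∩ I := by rw [hykey]; exact mem_sdiff.2 ⟨hm, hmK⟩
              exact (mem_inter.1 this).1
            rw [mem_suppF2] at hs
            rcases zmod2_eq_zero_or_one (y m) with h | h
            · exact absurd h hs
            · rw [h, if_neg hmK]
        refine ⟨d' + 1, w, Fin.snoc v' y, ?_, ?_, ?_, ?_⟩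
        · intro j
          induction j using Fin.lastCases with
          | last => rw [Fin.snoc_last]; exact hyS
          | cast j' => rw [Fin.snoc_castSucc]; exact hFsub (hmem j')
        · have heq : (fun j => (Fin.snoc v' y : Fin (d'+1) → Fin ℓ → ZMod 2) j + w)
              = Fin.snoc (fun j => v' j + w) (y + w) := by
            funext j
            induction j using Fin.lastCases with
            | last =>
                rw [Fin.snoc_last, Fin.snoc_last]
            | cast j' =>
                rw [Fin.snoc_castSucc, Fin.snoc_castSucc]
          rw [heq]
          apply chain_snoc _ _ hchain
          have hIsub : I ⊆ suppF2 (y + w) \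
              Finset.univ.biUnion (fun i => suppF2 (v' i + w)) := by
            intro m hm
            rw [mem_sdiff]
            constructor
            · rw [mem_suppF2]
              have h1 := hyval m hm
              have h2 := hwm m hm
              by_cases hmK : m ∈ K
              · rw [Pi.add_apply, h1, h2, if_pos hmK, if_pos hmK]; decide
              · rw [Pi.add_apply, h1, h2, if_neg hmK, if_neg hmK]; decide
            · rw [mem_biUnion]
              rintro ⟨i, _, hmem2⟩
              have h1 := hFval (v' i) (hmem i) m hm
              have h2 := hwm m hm
              rw [mem_suppF2] at hmem2
              apply hmem2
              rw [Pi.add_apply, h1, h2]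
              by_cases hmK : m ∈ K
              · rw [if_pos hmK]; decide
              · rw [if_neg hmK]; decide
          calc c = I.card := hIcard.symm
            _ ≤ _ := card_le_card hIsub
        · calc S.card ≤ 2 ^ c * F.card := hfib
            _ ≤ 2 ^ c * (2 ^ (c * d') * (∑ i ∈ Finset.range c, ℓ.choose i)) :=
              Nat.mul_le_mul_left _ hcardF
            _ = 2 ^ (c * (d' + 1)) * (∑ i ∈ Finset.range c, ℓ.choose i) := by
              rw [← mul_assoc, ← pow_add, Nat.mul_succ]
              ring_nf
        · intro m x hx hconst
          have h1 : x₀ m = x m := hconst x₀ (hFsub hx₀)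
          have h2 : w m = x₀ m := hagree m x₀ hx₀ (fun y' hy' => by
            rw [hconst y' (hFsub hy'), h1])
          rw [h2, h1]

lemma sum_choose_le_pow2 (n c : ℕ) : ∑ i ∈ Finset.range c, n.choose i ≤ 2 ^ n := by
  by_cases h : c ≤ n + 1
  · calc ∑ i ∈ Finset.range c, n.choose i
        ≤ ∑ i ∈ Finset.range (n + 1), n.choose i :=
          Finset.sum_le_sum_of_subset (Finset.range_subset_range.2 h)
      _ = 2 ^ n := Nat.sum_range_choose n
  · push_neg at h
    have : ∑ i ∈ Finset.range (n + 1), n.choose i = ∑ i ∈ Finset.range c, n.choose i := by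
      apply Finset.sum_subset (Finset.range_subset_range.2 (by omega))
      intro x _ hx
      rw [Finset.mem_range, not_lt] at hx
      exact Nat.choose_eq_zero_of_lt (by omega)
    rw [← this, Nat.sum_range_choose]

lemma sum_pow_le (l k : ℕ) (hl : 2 ≤ l) : ∑ i ∈ Finset.range (k + 1), l ^ i ≤ 2 * l ^ k := by
  induction k with
  | zero => simp
  | succ k ihk =>
      rw [Finset.sum_range_succ]
      have h1 : 2 * l ^ k ≤ l ^ (k + 1) := by
        rw [pow_succ']
        exact Nat.mul_le_mul_right _ hl
      have h2 : l ^ (k+1) + l ^ (k+1) = 2 * l ^ (k+1) := by ring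
      omega

lemma boundB_le (l c : ℕ) (hl : 0 < l) (hc : 0 < c) :
    ∑ i ∈ Finset.range c, l.choose i ≤ 2 * l ^ (c - 1) := by
  rcases Nat.lt_or_ge l 2 with h2 | h2
  · have hl1 : l = 1 := by omega
    subst hl1
    calc ∑ i ∈ Finset.range c, Nat.choose 1 i ≤ 2 ^ 1 := sum_choose_le_pow2 1 c
      _ = 2 * 1 ^ (c - 1) := by simp
  · obtain ⟨k, rfl⟩ : ∃ k, c = k + 1 := ⟨c - 1, by omega⟩
    calc ∑ i ∈ Finset.range (k + 1), l.choose i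
        ≤ ∑ i ∈ Finset.range (k + 1), l ^ i :=
          Finset.sum_le_sum (fun i _ => Nat.choose_le_pow l i)
      _ ≤ 2 * l ^ k := sum_pow_le l k h2
      _ = 2 * l ^ (k + 1 - 1) := by simp

end IncChainAux

/-- Lemma 2.4: for all positive integers `c, ℓ` and `1 ≤ L ≤ 2^ℓ`, every `S ⊆ 𝔽₂^ℓ` with
`|S| = L` has a translate `S + w` containing a `c`-increasing chain of length at least
`(1/c) log₂ (L/2) - (1 - 1/c) log₂ ℓ`. -/
theorem increasing_chain_binary (c ℓ : ℕ) (hc : 0 < c) (hℓ : 0 < ℓ)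
    (L : ℕ) (hL1 : 1 ≤ L) (hL2 : L ≤ 2 ^ ℓ)
    (S : Finset (Fin ℓ → ZMod 2)) (hS : S.card = L) :
    ∃ (w : Fin ℓ → ZMod 2) (d : ℕ) (v : Fin d → (Fin ℓ → ZMod 2)),
      ((1 : ℝ) / c) * Real.logb 2 ((L : ℝ) / 2) - (1 - (1 : ℝ) / c) * Real.logb 2 ℓ ≤ d ∧
      (∀ j, v j ∈ S) ∧
      IncreasingChainF2 c (fun j => v j + w) := by
  obtain ⟨d, w, v, hmem, hchain, hcard, -⟩ := IncChainAux.main_chain c hc S.card S le_rfl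
  refine ⟨w, d, v, ?_, hmem, hchain⟩
  have hLn : L ≤ 2 ^ (c * d) * (2 * ℓ ^ (c - 1)) := by
    rw [← hS]
    calc S.card ≤ 2 ^ (c * d) * (∑ i ∈ Finset.range c, ℓ.choose i) := hcard
      _ ≤ 2 ^ (c * d) * (2 * ℓ ^ (c - 1)) :=
        Nat.mul_le_mul_left _ (IncChainAux.boundB_le ℓ c hℓ hc)
  have hc' : (0 : ℝ) < (c : ℝ) := by exact_mod_cast hc
  have hL0 : (0 : ℝ) < (L : ℝ) := by exact_mod_cast hL1
  have hl0 : (0 : ℝ) < (ℓ : ℝ) := by exact_mod_cast hℓ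
  have hRpos : (0 : ℝ) < (2 : ℝ) ^ (c * d) * (2 * (ℓ : ℝ) ^ (c - 1)) := by positivity
  have hcast : (L : ℝ) ≤ (2 : ℝ) ^ (c * d) * (2 * (ℓ : ℝ) ^ (c - 1)) := by
    exact_mod_cast hLn
  have hlog : Real.logb 2 (L : ℝ) ≤ (c * d : ℕ) + 1 + ((c : ℝ) - 1) * Real.logb 2 (ℓ : ℝ) := by
    have h1 : Real.logb 2 (L : ℝ) ≤
        Real.logb 2 ((2 : ℝ) ^ (c * d) * (2 * (ℓ : ℝ) ^ (c - 1))) :=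
      (Real.logb_le_logb (by norm_num) hL0 hRpos).2 hcast
    rw [Real.logb_mul (by positivity) (by positivity),
      Real.logb_mul (by positivity) (by positivity),
      Real.logb_pow, Real.logb_pow, Real.logb_self_eq_one (by norm_num)] at h1
    have hcast2 : ((c - 1 : ℕ) : ℝ) = (c : ℝ) - 1 := by
      rw [Nat.cast_sub hc]; norm_num
    rw [hcast2] at h1
    calc Real.logb 2 (L : ℝ) ≤ (c * d : ℕ) * 1 + (1 + ((c : ℝ) - 1) * Real.logb 2 (ℓ : ℝ)) := h1
      _ = (c * d : ℕ) + 1 + ((c : ℝ) - 1) * Real.logb 2 (ℓ : ℝ) := by ring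
  rw [Real.logb_div (ne_of_gt hL0) two_ne_zero, Real.logb_self_eq_one (by norm_num)]
  have e1 : (1 : ℝ) - 1 / (c : ℝ) = ((c : ℝ) - 1) / (c : ℝ) := by field_simp
  have h2 : Real.logb 2 (L : ℝ) - 1 - ((c : ℝ) - 1) * Real.logb 2 (ℓ : ℝ) ≤ (c : ℝ) * d := by
    push_cast at hlog
    linarith
  have e2 : (1 / (c : ℝ)) * (Real.logb 2 (L : ℝ) - 1) -
      (((c : ℝ) - 1) / (c : ℝ)) * Real.logb 2 (ℓ : ℝ)
      = (1 / (c : ℝ)) * (Real.logb 2 (L : ℝ) - 1 - ((c : ℝ) - 1) * Real.logb 2 (ℓ : ℝ)) := by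
    ring
  rw [e1, e2]
  calc (1 / (c : ℝ)) * (Real.logb 2 (L : ℝ) - 1 - ((c : ℝ) - 1) * Real.logb 2 (ℓ : ℝ))
      ≤ (1 / (c : ℝ)) * ((c : ℝ) * d) := by
        apply mul_le_mul_of_nonneg_left h2
        positivity
    _ = d := by field_simp
end

section
/- (q-ary Sauer-Shelah lemma) For all integers q ≥ 2, ℓ ≥ 1, c ≥ 1 and every set S ⊆ [q]^ℓ: if |S| > 2·((q−1)·ℓ)^(c−1), then there exists a set of coordinates U ⊆ [ℓ] with |U| = c such that for every u ∈ [q]^U there exists some v ∈ S with the property that the restriction v|_U differs from u in every coordinate of U. -/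
open Finset

/-- `U` is good for `S`: every `u` is avoided on all of `U` by some `v ∈ S`. -/
def QGood {q ℓ : ℕ} (S : Finset (Fin ℓ → Fin q)) (U : Finset (Fin ℓ)) : Prop :=
  ∀ u : Fin ℓ → Fin q, ∃ v ∈ S, ∀ i ∈ U, v i ≠ u i

instance {q ℓ : ℕ} (S : Finset (Fin ℓ → Fin q)) (U : Finset (Fin ℓ)) :
    Decidable (QGood S U) := by unfold QGood; infer_instance

lemma qgood_mono {q ℓ : ℕ} {S S' : Finset (Fin ℓ → Fin q)} {U : Finset (Fin ℓ)}
    (hsub : S ⊆ S') (h : QGood S U) : QGood S' U := fun u =>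
  let ⟨v, hv, hvu⟩ := h u; ⟨v, hsub hv, hvu⟩

lemma qgood_subset {q ℓ : ℕ} {S : Finset (Fin ℓ → Fin q)} {U U' : Finset (Fin ℓ)}
    (hsub : U' ⊆ U) (h : QGood S U) : QGood S U' := fun u =>
  let ⟨v, hv, hvu⟩ := h u; ⟨v, hv, fun i hi => hvu i (hsub hi)⟩

/-- Pajor-style counting: `|S| ≤ Σ_{U good} (q-1)^{|U|}`. -/
lemma qpajor {q ℓ : ℕ} (hq : 2 ≤ q) (A : Finset (Fin ℓ)) :
    ∀ S : Finset (Fin ℓ → Fin q),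
      (∀ v ∈ S, ∀ w ∈ S, ∀ i, i ∉ A → v i = w i) →
      S.card ≤ ∑ U ∈ A.powerset, if QGood S U then (q-1)^U.card else 0 := by
  induction A using Finset.induction with
  | empty =>
    intro S hA
    simp only [powerset_empty, sum_singleton]
    rcases S.eq_empty_or_nonempty with h | ⟨v, hv⟩
    · simp [h]
    · have hgood : QGood S ∅ := fun u => ⟨v, hv, by simp⟩
      rw [if_pos hgood]
      simpa using Finset.card_le_one.2
        (fun a ha b hb => funext fun i => hA a ha b hb i (by simp))
  | @insert j A' hj ih =>
    intro S hA
    have hSsum : S.card = ∑ a : Fin q, (S.filter fun v => v j = a).card :=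
      card_eq_sum_card_fiberwise fun v _ => mem_univ (v j)
    have hIH : ∀ a : Fin q,
        (S.filter fun v => v j = a).card ≤
          ∑ U ∈ A'.powerset,
            if QGood (S.filter fun v => v j = a) U then (q-1)^U.card else 0 := by
      intro a
      apply ih
      intro v hv w hw i hi
      rcases eq_or_ne i j with rfl | hij
      · rw [(mem_filter.1 hv).2, (mem_filter.1 hw).2]
      · exact hA v (mem_filter.1 hv).1 w (mem_filter.1 hw).1 i
          (by simp [Finset.mem_insert, hij, hi])
    have step : ∀ U ∈ A'.powerset,
        (∑ a : Fin q, if QGood (S.filter fun v => v j = a) U then (q-1)^U.card else 0)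
          ≤ (if QGood S U then (q-1)^U.card else 0) +
            (if QGood S (insert j U) then (q-1)^(insert j U).card else 0) := by
      intro U hU
      have hjU : j ∉ U := fun h => hj (mem_powerset.1 hU h)
      set T := univ.filter (fun a : Fin q => QGood (S.filter fun v => v j = a) U) with hT
      have hL : (∑ a : Fin q,
          if QGood (S.filter fun v => v j = a) U then (q-1)^U.card else 0)
          = T.card * (q-1)^U.card := by
        rw [Finset.sum_ite, Finset.sum_const, Finset.sum_const, smul_eq_mul,
          smul_zero, add_zero]
      rw [hL]
      rcases Nat.lt_or_ge T.card 1 with h0 | h1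
      · simp [Nat.lt_one_iff.mp h0]
      have hGood : QGood S U := by
        obtain ⟨a, ha⟩ := card_pos.1 h1
        exact qgood_mono (filter_subset _ _) ((mem_filter.1 ha).2)
      rcases Nat.lt_or_ge T.card 2 with h2 | h2
      · have hT1 : T.card = 1 := le_antisymm (Nat.lt_succ_iff.mp h2) h1
        rw [hT1, one_mul, if_pos hGood]
        exact Nat.le_add_right _ _
      · have hGood2 : QGood S (insert j U) := by
          intro u
          obtain ⟨a, haT, hane⟩ := exists_mem_ne h2 (u j)
          obtain ⟨v, hv, hvu⟩ := (mem_filter.1 haT).2 u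
          refine ⟨v, (mem_filter.1 hv).1, ?_⟩
          intro i hi
          rcases mem_insert.1 hi with rfl | hiU
          · rw [(mem_filter.1 hv).2]; exact hane
          · exact hvu i hiU
        rw [if_pos hGood, if_pos hGood2, card_insert_of_notMem hjU, pow_succ]
        have hTq : T.card ≤ q := by
          calc T.card ≤ (univ : Finset (Fin q)).card := card_filter_le _ _
          _ = q := by simp
        have hq1 : 1 + (q - 1) = q := Nat.add_sub_cancel' (le_trans one_le_two hq)
        calc T.card * (q-1)^U.card ≤ q * (q-1)^U.card := Nat.mul_le_mul_right _ hTq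
        _ = (1 + (q-1)) * (q-1)^U.card := by rw [hq1]
        _ = (q-1)^U.card + (q-1)^U.card * (q-1) := by ring
    have hdisj : Disjoint A'.powerset (A'.powerset.image (insert j)) := by
      rw [disjoint_left]
      intro t ht htim
      obtain ⟨u, hu, rfl⟩ := mem_image.1 htim
      exact hj (mem_powerset.1 ht (mem_insert_self j u))
    have hinj : ∀ x ∈ A'.powerset, ∀ y ∈ A'.powerset,
        insert j x = insert j y → x = y := by
      intro x hx y hy hxy
      have hjx : j ∉ x := fun h => hj (mem_powerset.1 hx h)
      have hjy : j ∉ y := fun h => hj (mem_powerset.1 hy h)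
      rw [← Finset.erase_insert hjx, hxy, Finset.erase_insert hjy]
    calc S.card = ∑ a : Fin q, (S.filter fun v => v j = a).card := hSsum
      _ ≤ ∑ a : Fin q, ∑ U ∈ A'.powerset,
            (if QGood (S.filter fun v => v j = a) U then (q-1)^U.card else 0) :=
          sum_le_sum fun a _ => hIH a
      _ = ∑ U ∈ A'.powerset, ∑ a : Fin q,
            (if QGood (S.filter fun v => v j = a) U then (q-1)^U.card else 0) :=
          sum_comm
      _ ≤ ∑ U ∈ A'.powerset, ((if QGood S U then (q-1)^U.card else 0) +
            (if QGood S (insert j U) then (q-1)^(insert j U).card else 0)) :=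
          sum_le_sum step
      _ = (∑ U ∈ A'.powerset, if QGood S U then (q-1)^U.card else 0) +
            (∑ U ∈ A'.powerset, if QGood S (insert j U) then (q-1)^(insert j U).card else 0) :=
          sum_add_distrib
      _ = ∑ U ∈ (insert j A').powerset, (if QGood S U then (q-1)^U.card else 0) := by
          rw [powerset_insert, sum_union hdisj, sum_image hinj]

lemma qgeom_le (m : ℕ) (hm : 2 ≤ m) :
    ∀ c : ℕ, 1 ≤ c → ∑ j ∈ Finset.range c, m^j ≤ 2 * m^(c-1) := by
  intro c
  induction c with
  | zero => omega
  | succ n ih =>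
    intro _
    rcases Nat.eq_zero_or_pos n with rfl | hn
    · simp
    · rw [Finset.sum_range_succ]
      have h1 := ih hn
      have h2 : 2 * m ^ (n-1) ≤ m ^ n := by
        calc 2 * m^(n-1) ≤ m * m^(n-1) := Nat.mul_le_mul_right _ hm
        _ = m^(n-1+1) := by rw [pow_succ, mul_comm]
        _ = m^n := by congr 1; omega
      have hnn : n + 1 - 1 = n := by omega
      rw [hnn]
      omega

lemma qcount_le (q ℓ c : ℕ) (hq : 2 ≤ q) (hℓ : 1 ≤ ℓ) (hc : 1 ≤ c) :
    ∑ j ∈ Finset.range c, ℓ.choose j * (q-1)^j ≤ 2 * ((q-1)*ℓ)^(c-1) := by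
  rcases eq_or_lt_of_le hc with hc1 | hc2
  · rw [← hc1]
    simp
  rcases eq_or_lt_of_le hℓ with hl1 | hl2
  · -- ℓ = 1, c ≥ 2
    subst hl1
    have hsum : ∑ j ∈ Finset.range c, Nat.choose 1 j * (q-1)^j
        = ∑ j ∈ Finset.range 2, Nat.choose 1 j * (q-1)^j := by
      symm
      apply Finset.sum_subset
      · intro x hx
        simp only [Finset.mem_range] at *
        omega
      · intro x hx hx2
        simp only [Finset.mem_range] at hx hx2
        have hx1 : 1 < x := by omega
        simp [Nat.choose_eq_zero_of_lt hx1]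
    have h2' : ∑ j ∈ Finset.range 2, Nat.choose 1 j * (q-1)^j = 1 + (q-1) := by
      rw [Finset.sum_range_succ, Finset.sum_range_one]
      simp
    have hmul : ((q-1)*1)^(c-1) = (q-1)^(c-1) := by rw [mul_one]
    have hle : (q-1) ≤ (q-1)^(c-1) := Nat.le_self_pow (by omega) _
    rw [hsum, h2', hmul]
    omega
  · -- ℓ ≥ 2
    have hm : 2 ≤ (q-1)*ℓ := by
      calc 2 = 1 * 2 := by omega
      _ ≤ (q-1) * ℓ := Nat.mul_le_mul (by omega) hl2
    calc ∑ j ∈ Finset.range c, ℓ.choose j * (q-1)^j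
        ≤ ∑ j ∈ Finset.range c, ((q-1)*ℓ)^j := by
          apply Finset.sum_le_sum
          intro j _
          calc ℓ.choose j * (q-1)^j ≤ ℓ^j * (q-1)^j :=
            Nat.mul_le_mul_right _ (Nat.choose_le_pow ℓ j)
          _ = ((q-1)*ℓ)^j := by rw [← mul_pow, mul_comm]
      _ ≤ 2*((q-1)*ℓ)^(c-1) := qgeom_le _ hm c hc

/-- Lemma 6.3 (`q`-ary Sauer-Shelah): for integers `q ≥ 2`, `ℓ ≥ 1`, `c ≥ 1` and any
`S ⊆ [q]^ℓ` with `|S| > 2 ((q-1) ℓ)^(c-1)`, there is a set `U` of `c` coordinates such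
that for every `u ∈ [q]^U` there is some `v ∈ S` whose restriction to `U` differs from
`u` in every coordinate of `U`. -/
theorem qary_sauer_shelah (q ℓ c : ℕ) (hq : 2 ≤ q) (hℓ : 1 ≤ ℓ) (hc : 1 ≤ c)
    (S : Finset (Fin ℓ → Fin q)) (hS : 2 * ((q - 1) * ℓ) ^ (c - 1) < S.card) :
    ∃ U : Finset (Fin ℓ), U.card = c ∧
      ∀ u : Fin ℓ → Fin q, ∃ v ∈ S, ∀ i ∈ U, v i ≠ u i := by
  by_contra hcon
  have hsmall : ∀ U : Finset (Fin ℓ), QGood S U → U.card < c := by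
    intro U hU
    by_contra h
    push_neg at h
    obtain ⟨U', hsub, hcard⟩ := Finset.exists_subset_card_eq h
    exact hcon ⟨U', hcard, qgood_subset hsub hU⟩
  have h1 : S.card ≤ ∑ U ∈ (univ : Finset (Fin ℓ)).powerset,
      if QGood S U then (q-1)^U.card else 0 :=
    qpajor hq univ S (fun v _ w _ i hi => absurd (mem_univ i) hi)
  have h2 : (∑ U ∈ (univ : Finset (Fin ℓ)).powerset, if QGood S U then (q-1)^U.card else 0)
      ≤ ∑ U ∈ (univ : Finset (Fin ℓ)).powerset,
          (if U.card < c then (q-1)^U.card else 0 : ℕ) := by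
    apply sum_le_sum
    intro U _
    by_cases h : QGood S U
    · rw [if_pos h, if_pos (hsmall U h)]
    · simp [h]
  have h3 : (∑ U ∈ (univ : Finset (Fin ℓ)).powerset,
        (if U.card < c then (q-1)^U.card else 0 : ℕ))
      = ∑ j ∈ range (ℓ+1), (ℓ.choose j) * (if j < c then (q-1)^j else 0 : ℕ) := by
    rw [Finset.sum_powerset_apply_card (fun m => if m < c then (q-1)^m else 0 : ℕ → ℕ)]
    simp [Finset.card_univ, smul_eq_mul]
  have h4 : (∑ j ∈ range (ℓ+1), (ℓ.choose j) * (if j < c then (q-1)^j else 0 : ℕ))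
      ≤ ∑ j ∈ range c, ℓ.choose j * (q-1)^j := by
    have : ∀ j ∈ range (ℓ+1),
        (ℓ.choose j) * (if j < c then (q-1)^j else 0 : ℕ)
        = if j < c then ℓ.choose j * (q-1)^j else 0 := by
      intro j _; by_cases h : j < c <;> simp [h]
    rw [Finset.sum_congr rfl this, ← Finset.sum_filter]
    apply Finset.sum_le_sum_of_subset
    intro j hj
    simp only [mem_filter, mem_range] at hj ⊢
    exact hj.2
  have h5 := qcount_le q ℓ c hq hℓ hc
  omega
end

section
/- Let p ∈ (0, 1/2) and let δ_p > 0 and n₀ be such that for all n ≥ n₀ and every x ∈ 𝔽₂ⁿ, two independent uniform samples w₁, w₂ from B_n(0,p) satisfy Pr[w₁ + w₂ ∈ B_n(x,p)] ≤ 2^(−δ_p·n). Then for all n ≥ n₀, all positive integers ℓ and L with L + 1 ≤ 2^ℓ and d := ⌊(1/2)·log₂(L/2) − (1/2)·log₂ ℓ⌋ ≥ 1, and every set S ⊆ 𝔽₂^ℓ with |S| = L + 1, the following holds: if X₁, …, X_ℓ are picked independently and uniformly at random from B_n(0,p) and for v ∈ 𝔽₂^ℓ we set X_v = Σ_{i=1}^ℓ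 v_i·X_i, then Pr[for all v ∈ S, X_v ∈ B_n(0,p)] ≤ 2ⁿ · 2^(−δ_p·d·n). -/
open Finset

private lemma zmod2_ne_cases : ∀ y z t : ZMod 2, z ≠ t → y = z ∨ y = t := by decide

private lemma zmod2_eq_one : ∀ z : ZMod 2, ¬ z = 0 → z = 1 := by decide

lemma sauer_pair {ℓ : ℕ} (A : Finset (Fin ℓ)) :
    ∀ (G : Finset ((Fin ℓ) → ZMod 2)),
      (∀ v ∈ G, ∀ i, i ∉ A → v i = 0) →
      A.card + 2 ≤ G.card →
      ∃ i ∈ A, ∃ j ∈ A, i ≠ j ∧ ∀ x y : ZMod 2, ∃ v ∈ G, v i = x ∧ v j = y := by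
  classical
  induction A using Finset.induction_on with
  | empty =>
      intro G hsupp hcard
      exfalso
      have h1 : G.card ≤ 1 := by
        apply Finset.card_le_one.2
        intro u hu w hw
        funext i
        rw [hsupp u hu i (notMem_empty i), hsupp w hw i (notMem_empty i)]
      omega
  | @insert a A₀ ha IH =>
      intro G hsupp hcard
      set G₀ := G.filter (fun v => v a = 0) with hG₀def
      set G₁ := G.filter (fun v => ¬ v a = 0) with hG₁def
      set G₁' := G₁.image (fun v => Function.update v a 0) with hG₁'def
      have hmemG₀ : ∀ v ∈ G₀, v ∈ G ∧ v a = 0 := fun v hv => mem_filter.1 hv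
      have hmemG₁ : ∀ v ∈ G₁, v ∈ G ∧ v a = 1 := fun v hv =>
        ⟨(mem_filter.1 hv).1, zmod2_eq_one _ (mem_filter.1 hv).2⟩
      have hinj : Set.InjOn (fun v => Function.update v a 0) (G₁ : Set (Fin ℓ → ZMod 2)) := by
        intro u hu w hw h
        have hu1 := (hmemG₁ u hu).2
        have hw1 := (hmemG₁ w hw).2
        funext i
        by_cases hia : i = a
        · subst hia; rw [hu1, hw1]
        · have := congrFun h i
          simpa [Function.update, hia] using this
      have hcard1 : G₁'.card = G₁.card := Finset.card_image_of_injOn hinj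
      have hsplit : G₀.card + G₁.card = G.card := by
        rw [hG₀def, hG₁def]; exact Finset.card_filter_add_card_filter_not _
      have hUI : (G₀ ∪ G₁').card + (G₀ ∩ G₁').card = G.card := by
        rw [Finset.card_union_add_card_inter, hcard1, hsplit]
      -- support facts
      have hsuppU : ∀ v ∈ G₀ ∪ G₁', ∀ i, i ∉ A₀ → v i = 0 := by
        intro v hv i hi
        rcases mem_union.1 hv with hv | hv
        · by_cases hia : i = a
          · subst hia; exact (hmemG₀ v hv).2
          · exact hsupp v (hmemG₀ v hv).1 i (by simp [hia, hi])
        · rcases mem_image.1 hv with ⟨w, hw, rfl⟩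
          by_cases hia : i = a
          · subst hia; simp
          · rw [Function.update_of_ne hia]
            exact hsupp w (hmemG₁ w hw).1 i (by simp [hia, hi])
      have hins : (insert a A₀).card = A₀.card + 1 := Finset.card_insert_of_notMem ha
      rcases le_or_gt 2 (G₀ ∩ G₁').card with hI | hI
      · -- two elements in the intersection: shatter (a, j)
        obtain ⟨u, hu, w, hw, huw⟩ := Finset.one_lt_card.1 (by omega : 1 < (G₀ ∩ G₁').card)
        obtain ⟨j, hj⟩ := Function.ne_iff.1 huw
        have hua : u a = 0 := (hmemG₀ u (mem_inter.1 hu).1).2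
        have hwa : w a = 0 := (hmemG₀ w (mem_inter.1 hw).1).2
        have hja : j ≠ a := by
          intro h; subst h; rw [hua, hwa] at hj; exact hj rfl
        have hjA₀ : j ∈ A₀ := by
          by_contra hjA
          have h1 := hsuppU u (mem_union_left _ (mem_inter.1 hu).1) j hjA
          have h2 := hsuppU w (mem_union_left _ (mem_inter.1 hw).1) j hjA
          rw [h1, h2] at hj; exact hj rfl
        refine ⟨a, mem_insert_self a A₀, j, mem_insert_of_mem hjA₀, fun h => ha (h ▸ hjA₀), ?_⟩
        intro x y
        rcases zmod2_ne_cases y (u j) (w j) hj with hy | hy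
        · -- value y realized by u
          rcases zmod2_ne_cases x 0 1 (by decide) with hx | hx
          · exact ⟨u, (hmemG₀ u (mem_inter.1 hu).1).1, by rw [hx, hua], by rw [hy]⟩
          · -- need a preimage of u in G₁
            rcases mem_image.1 (mem_inter.1 hu).2 with ⟨u', hu', hequ⟩
            refine ⟨u', (hmemG₁ u' hu').1, by rw [hx, (hmemG₁ u' hu').2], ?_⟩
            rw [hy, ← hequ, Function.update_of_ne hja]
        · rcases zmod2_ne_cases x 0 1 (by decide) with hx | hx
          · exact ⟨w, (hmemG₀ w (mem_inter.1 hw).1).1, by rw [hx, hwa], by rw [hy]⟩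
          · rcases mem_image.1 (mem_inter.1 hw).2 with ⟨w', hw', heqw⟩
            refine ⟨w', (hmemG₁ w' hw').1, by rw [hx, (hmemG₁ w' hw').2], ?_⟩
            rw [hy, ← heqw, Function.update_of_ne hja]
      · -- intersection small: recurse on the union
        have hcardU : A₀.card + 2 ≤ (G₀ ∪ G₁').card := by
          omega
        obtain ⟨i, hi, j, hj, hij, hshat⟩ := IH (G₀ ∪ G₁') hsuppU hcardU
        have hia : i ≠ a := fun h => ha (h ▸ hi)
        have hja : j ≠ a := fun h => ha (h ▸ hj)
        refine ⟨i, mem_insert_of_mem hi, j, mem_insert_of_mem hj, hij, ?_⟩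
        intro x y
        obtain ⟨v, hv, hvi, hvj⟩ := hshat x y
        rcases mem_union.1 hv with hv | hv
        · exact ⟨v, (hmemG₀ v hv).1, hvi, hvj⟩
        · rcases mem_image.1 hv with ⟨v', hv', heq⟩
          refine ⟨v', (hmemG₁ v' hv').1, ?_, ?_⟩
          · rw [← hvi, ← heq, Function.update_of_ne hia]
          · rw [← hvj, ← heq, Function.update_of_ne hja]


private lemma zmod2_cases : ∀ x : ZMod 2, x = 0 ∨ x = 1 := by decide

private lemma zmod2_succ_ne : ∀ x : ZMod 2, x + 1 ≠ x := by decide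


lemma extract {ℓ : ℕ} :
    ∀ (r : ℕ) (A : Finset (Fin ℓ)) (S : Finset (Fin ℓ → ZMod 2)),
      (∀ v ∈ S, ∀ w ∈ S, (∀ i ∈ A, v i = w i) → v = w) →
      (A.card + 1) * 4 ^ r + 1 ≤ S.card →
      ∃ s ∈ S, ∃ w : Fin r → (Fin ℓ → ZMod 2), ∃ α β : Fin r → Fin ℓ,
        (∀ k, w k ∈ S) ∧
        (∀ k, α k ∈ A ∧ β k ∈ A) ∧
        (∀ k, α k ≠ β k) ∧
        (∀ k k' : Fin r, k < k' → α k' ≠ α k ∧ α k' ≠ β k ∧ β k' ≠ α k ∧ β k' ≠ β k) ∧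
        (∀ k, w k (α k) ≠ s (α k) ∧ w k (β k) ≠ s (β k)) ∧
        (∀ k k' : Fin r, k < k' → w k' (α k) = s (α k) ∧ w k' (β k) = s (β k)) := by
  classical
  intro r
  induction r with
  | zero =>
      intro A S hinj hcard
      have hne : S.Nonempty := Finset.card_pos.1 (by omega)
      obtain ⟨s, hs⟩ := hne
      exact ⟨s, hs, fun k => k.elim0, fun k => k.elim0, fun k => k.elim0,
        fun k => k.elim0, fun k => k.elim0, fun k => k.elim0,
        fun k k' h => k.elim0, fun k => k.elim0, fun k k' h => k.elim0⟩
  | succ r IH =>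
      intro A S hinj hcard
      -- normalize and apply Sauer
      set N : (Fin ℓ → ZMod 2) → (Fin ℓ → ZMod 2) :=
        fun v => fun i => if i ∈ A then v i else 0 with hN
      have hNinj : Set.InjOn N (S : Set (Fin ℓ → ZMod 2)) := by
        intro u hu v hv h
        apply hinj u hu v hv
        intro i hi
        have := congrFun h i
        simpa [hN, hi] using this
      set G := S.image N with hG
      have hGcard : G.card = S.card := Finset.card_image_of_injOn hNinj
      have hGsupp : ∀ v ∈ G, ∀ i, i ∉ A → v i = 0 := by
        intro v hv i hi
        rcases mem_image.1 hv with ⟨u, hu, rfl⟩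
        simp [hN, hi]
      have h4 : 4 ≤ 4 ^ (r + 1) := by
        calc (4:ℕ) = 4 ^ 1 := (pow_one 4).symm
          _ ≤ 4 ^ (r + 1) := Nat.pow_le_pow_right (by norm_num) (by omega)
      have hmul := Nat.mul_le_mul_left (A.card + 1) h4
      have hGbig : A.card + 2 ≤ G.card := by
        rw [hGcard]
        have : (A.card + 1) * 4 ≤ (A.card + 1) * 4 ^ (r+1) := hmul
        omega
      obtain ⟨i, hiA, j, hjA, hij, hshatG⟩ := sauer_pair A G hGsupp hGbig
      have hshatS : ∀ x y : ZMod 2, ∃ u ∈ S, u i = x ∧ u j = y := by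
        intro x y
        obtain ⟨v, hv, hvi, hvj⟩ := hshatG x y
        rcases mem_image.1 hv with ⟨u, hu, rfl⟩
        exact ⟨u, hu, by simpa [hN, hiA] using hvi, by simpa [hN, hjA] using hvj⟩
      -- the four classes
      set C : ZMod 2 → ZMod 2 → Finset (Fin ℓ → ZMod 2) :=
        fun x y => S.filter (fun v => v i = x ∧ v j = y) with hC
      have hcover : S ⊆ ((C 0 0 ∪ C 0 1) ∪ (C 1 0 ∪ C 1 1)) := by
        intro v hv
        rcases zmod2_cases (v i) with hx | hx <;> rcases zmod2_cases (v j) with hy | hy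
        · exact mem_union_left _ (mem_union_left _ (mem_filter.2 ⟨hv, hx, hy⟩))
        · exact mem_union_left _ (mem_union_right _ (mem_filter.2 ⟨hv, hx, hy⟩))
        · exact mem_union_right _ (mem_union_left _ (mem_filter.2 ⟨hv, hx, hy⟩))
        · exact mem_union_right _ (mem_union_right _ (mem_filter.2 ⟨hv, hx, hy⟩))
      have hsum : S.card ≤ (C 0 0).card + (C 0 1).card + (C 1 0).card + (C 1 1).card := by
        calc S.card ≤ ((C 0 0 ∪ C 0 1) ∪ (C 1 0 ∪ C 1 1)).card :=
              Finset.card_le_card hcover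
          _ ≤ (C 0 0 ∪ C 0 1).card + (C 1 0 ∪ C 1 1).card := Finset.card_union_le _ _
          _ ≤ ((C 0 0).card + (C 0 1).card) + ((C 1 0).card + (C 1 1).card) :=
              Nat.add_le_add (Finset.card_union_le _ _) (Finset.card_union_le _ _)
          _ = _ := by ring
      obtain ⟨x, y, hbig⟩ : ∃ x y : ZMod 2, S.card ≤ 4 * (C x y).card := by
        by_contra hcon
        push_neg at hcon
        have h00 := hcon 0 0
        have h01 := hcon 0 1
        have h10 := hcon 1 0
        have h11 := hcon 1 1
        omega
      set S' := C x y with hS'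
      have hS'S : S' ⊆ S := Finset.filter_subset _ _
      have hS'i : ∀ v ∈ S', v i = x := fun v hv => (mem_filter.1 hv).2.1
      have hS'j : ∀ v ∈ S', v j = y := fun v hv => (mem_filter.1 hv).2.2
      obtain ⟨w₀, hw₀S, hw₀i, hw₀j⟩ := hshatS (x + 1) (y + 1)
      set A' := (A.erase i).erase j with hA'
      have hjA' : j ∈ A.erase i := Finset.mem_erase.2 ⟨Ne.symm hij, hjA⟩
      have hA'card : A'.card + 2 = A.card := by
        have h3 : (A.erase i).card = A.card - 1 := Finset.card_erase_of_mem hiA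
        have h4 : A'.card = (A.erase i).card - 1 := by
          rw [hA']; exact Finset.card_erase_of_mem hjA'
        have h1 : 1 ≤ A.card := Finset.card_pos.2 ⟨i, hiA⟩
        have h2 : 1 ≤ (A.erase i).card := Finset.card_pos.2 ⟨j, hjA'⟩
        omega
      have hA'sub : A' ⊆ A := (Finset.erase_subset _ _).trans (Finset.erase_subset _ _)
      have hinj' : ∀ v ∈ S', ∀ u ∈ S', (∀ t ∈ A', v t = u t) → v = u := by
        intro v hv u hu hagree
        apply hinj v (hS'S hv) u (hS'S hu)
        intro t htA
        by_cases hti : t = i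
        · subst hti; rw [hS'i v hv, hS'i u hu]
        · by_cases htj : t = j
          · subst htj; rw [hS'j v hv, hS'j u hu]
          · exact hagree t (by rw [hA']; exact Finset.mem_erase.2 ⟨htj, Finset.mem_erase.2 ⟨hti, htA⟩⟩)
      have hcard' : (A'.card + 1) * 4 ^ r + 1 ≤ S'.card := by
        have hps : (4:ℕ) ^ (r+1) = 4 ^ r * 4 := pow_succ 4 r
        have hq : 1 ≤ 4 ^ r := Nat.one_le_pow _ _ (by norm_num)
        nlinarith [hbig, hcard, hA'card]
      obtain ⟨s, hsS', w', α', β', hw'S, hABmem, hαβ, hpair, hflip, hagree⟩ :=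
        IH A' S' hinj' hcard'
      refine ⟨s, hS'S hsS', Fin.cases w₀ w', Fin.cases i α', Fin.cases j β', ?_, ?_, ?_, ?_, ?_, ?_⟩
      · intro k
        induction k using Fin.cases with
        | zero => simpa using hw₀S
        | succ m => simpa using hS'S (hw'S m)
      · intro k
        induction k using Fin.cases with
        | zero => simpa using ⟨hiA, hjA⟩
        | succ m => simpa using ⟨hA'sub (hABmem m).1, hA'sub (hABmem m).2⟩
      · intro k
        induction k using Fin.cases with
        | zero => simpa using hij
        | succ m => simpa using hαβ m
      · intro k k' hlt
        induction k using Fin.cases with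
        | zero =>
            induction k' using Fin.cases with
            | zero => exact absurd hlt (lt_irrefl _)
            | succ m' =>
                have h1 : α' m' ∈ A' := (hABmem m').1
                have h2 : β' m' ∈ A' := (hABmem m').2
                have hαi : α' m' ≠ i := fun h =>
                  (Finset.mem_erase.1 (Finset.mem_erase.1 (hA' ▸ h1)).2).1 h
                have hαj : α' m' ≠ j := fun h => (Finset.mem_erase.1 (hA' ▸ h1)).1 h
                have hβi : β' m' ≠ i := fun h =>
                  (Finset.mem_erase.1 (Finset.mem_erase.1 (hA' ▸ h2)).2).1 h
                have hβj : β' m' ≠ j := fun h => (Finset.mem_erase.1 (hA' ▸ h2)).1 h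
                simpa using ⟨hαi, hαj, hβi, hβj⟩
        | succ m =>
            induction k' using Fin.cases with
            | zero => exact absurd hlt (Fin.not_lt_zero _)
            | succ m' =>
                have hmm : m < m' := by
                  have := hlt
                  rwa [Fin.succ_lt_succ_iff] at this
                simpa using hpair m m' hmm
      · intro k
        induction k using Fin.cases with
        | zero =>
            have hsi : s i = x := hS'i s hsS'
            have hsj : s j = y := hS'j s hsS'
            simp only [Fin.cases_zero]
            rw [hw₀i, hw₀j, hsi, hsj]
            exact ⟨zmod2_succ_ne x, zmod2_succ_ne y⟩
        | succ m => simpa using hflip m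
      · intro k k' hlt
        induction k using Fin.cases with
        | zero =>
            induction k' using Fin.cases with
            | zero => exact absurd hlt (lt_irrefl _)
            | succ m' =>
                have h1 : w' m' ∈ S' := hw'S m'
                simp only [Fin.cases_zero, Fin.cases_succ]
                rw [hS'i _ h1, hS'j _ h1, hS'i s hsS', hS'j s hsS']
                exact ⟨rfl, rfl⟩
        | succ m =>
            induction k' using Fin.cases with
            | zero => exact absurd hlt (Fin.not_lt_zero _)
            | succ m' =>
                have hmm : m < m' := by
                  have := hlt
                  rwa [Fin.succ_lt_succ_iff] at this
                simpa using hagree m m' hmm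


lemma peel {V : Type} [Fintype V] [DecidableEq V] [AddCommGroup V] [Module (ZMod 2) V]
    (Bp : V → Prop) (η : ℝ) (hη : 0 ≤ η)
    (hp2 : ∀ x : V,
      ((Nat.card {w : V × V // Bp w.1 ∧ Bp w.2 ∧ Bp (x + (w.1 + w.2))} : ℝ))
        ≤ η * (Nat.card {w : V // Bp w} : ℝ) ^ 2) :
    ∀ (r : ℕ) (ι : Type) (instF : Fintype ι) (instD : DecidableEq ι)
      (t : Fin r → ι → ZMod 2) (α β : Fin r → ι),
      (∀ s, α s ≠ β s) →
      (∀ s s' : Fin r, s < s' → α s' ≠ α s ∧ α s' ≠ β s ∧ β s' ≠ α s ∧ β s' ≠ β s) →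
      (∀ s, t s (α s) = 1 ∧ t s (β s) = 1) →
      (∀ s s' : Fin r, s < s' → t s' (α s) = 0 ∧ t s' (β s) = 0) →
      ∀ y : V,
      ((Nat.card {X : ι → V // (∀ i, Bp (X i)) ∧ ∀ s, Bp (y + ∑ i, t s i • X i)} : ℝ))
        ≤ η ^ r * (Nat.card {w : V // Bp w} : ℝ) ^ (Fintype.card ι) := by
  classical
  intro r
  induction r with
  | zero =>
      intro ι instF instD t α β _ _ _ _ y
      have e1 : {X : ι → V // (∀ i, Bp (X i)) ∧ ∀ s : Fin 0, Bp (y + ∑ i, t s i • X i)}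
          ≃ (∀ _ : ι, {v : V // Bp v}) :=
        (Equiv.subtypeEquivRight (fun X => ⟨fun h => h.1, fun h => ⟨h, fun s => s.elim0⟩⟩)).trans
          Equiv.subtypePiEquivPi
      rw [Nat.card_congr e1, Nat.card_pi]
      simp only [Finset.prod_const, Finset.card_univ]
      rw [pow_zero, one_mul, Nat.cast_pow]
  | succ r IH =>
      intro ι instF instD t α β hab hd h1 h0 y
      set a := α 0 with ha
      set b := β 0 with hb
      have hab0 : a ≠ b := hab 0
      have hba : ¬ b = a := fun h => hab0 h.symm
      set ι' := {i : ι // i ≠ a ∧ i ≠ b} with hι'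
      set m : ((ι' → V) × V × V) → (ι → V) :=
        fun z i => if h1 : i = a then z.2.1 else if h2 : i = b then z.2.2
          else z.1 ⟨i, h1, h2⟩ with hm
      have hma : ∀ z, m z a = z.2.1 := fun z => dif_pos rfl
      have hmb : ∀ z, m z b = z.2.2 := fun z => by simp [hm, hba]
      have hmi : ∀ z (i : ι'), m z i.1 = z.1 i := fun z i => by
        simp [hm, i.2.1, i.2.2]
      set e : (ι → V) ≃ ((ι' → V) × V × V) :=
        { toFun := fun X => (fun i => X i.1, X a, X b)
          invFun := m
          left_inv := by
            intro X; funext i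
            by_cases hia : i = a
            · subst hia; simp [hm]
            · by_cases hib : i = b
              · subst hib; simp [hm, hia]
              · simp [hm, hia, hib]
          right_inv := by
            intro z
            refine Prod.ext ?_ (Prod.ext ?_ ?_)
            · funext i; exact hmi z i
            · exact hma z
            · exact hmb z } with he
      have hsymm : ∀ z, e.symm z = m z := fun z => rfl
      -- sum splitting
      have hmemsub : ∀ x : ι, x ∈ (univ.erase a).erase b ↔ x ≠ a ∧ x ≠ b := by
        intro x; simp [Finset.mem_erase]; tauto
      have hsum : ∀ (u : ι → ZMod 2) (X : ι → V),
          ∑ i, u i • X i = u a • X a + u b • X b + ∑ i : ι', u i.1 • X i.1 := by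
        intro u X
        have hbmem : b ∈ univ.erase a := Finset.mem_erase.2 ⟨hba, Finset.mem_univ b⟩
        rw [← Finset.add_sum_erase _ _ (Finset.mem_univ a),
            ← Finset.add_sum_erase _ _ hbmem,
            Finset.sum_subtype ((univ.erase a).erase b) hmemsub (fun i => u i • X i)]
        rw [add_assoc]
      set P : (ι → V) → Prop :=
        fun X => (∀ i, Bp (X i)) ∧ ∀ s : Fin (r+1), Bp (y + ∑ i, t s i • X i) with hP
      set G : (ι' → V) → Prop :=
        fun X' => (∀ i, Bp (X' i)) ∧
          ∀ s : Fin r, Bp (y + ∑ i : ι', (fun s' (i' : ι') => t (Fin.succ s') i'.1) s i • X' i)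
        with hG
      -- step 1: card as a sum over fibers
      have step1 : Nat.card {X : ι → V // P X}
          = ∑ X' : ι' → V, Nat.card {w : V × V // P (m (X', w))} := by
        have hcongr : ∀ X, P X ↔ (fun z => P (m z)) (e X) := fun X => by
          simp only []
          rw [show m (e X) = X from e.left_inv X]
        rw [Nat.card_congr (Equiv.subtypeEquiv (q := fun z => P (m z)) e hcongr)]
        rw [Nat.card_congr (Equiv.subtypeProdEquivSigmaSubtype (fun X' (w : V × V) => P (m (X', w))))]
        rw [Nat.card_eq_fintype_card, Fintype.card_sigma]
        exact Finset.sum_congr rfl (fun X' _ => (Nat.card_eq_fintype_card).symm)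
      -- step 2: per-fiber bound
      have step2 : ∀ X' : ι' → V,
          (Nat.card {w : V × V // P (m (X', w))} : ℝ)
            ≤ if G X' then η * (Nat.card {w : V // Bp w} : ℝ) ^ 2 else 0 := by
        intro X'
        by_cases hGX : G X'
        · rw [if_pos hGX]
          set x := y + ∑ i : ι', t 0 i.1 • X' i with hx
          refine le_trans ?_ (hp2 x)
          have h10a : t 0 a = 1 := by rw [ha]; exact (h1 0).1
          have h10b : t 0 b = 1 := by rw [hb]; exact (h1 0).2
          have himp : ∀ w : V × V, P (m (X', w)) →
              Bp w.1 ∧ Bp w.2 ∧ Bp (x + (w.1 + w.2)) := by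
            intro w hw
            have h1a := hw.1 a
            have h1b := hw.1 b
            rw [hma] at h1a
            rw [hmb] at h1b
            refine ⟨h1a, h1b, ?_⟩
            have hc := hw.2 0
            have heq : x + (w.1 + w.2) = y + ∑ i, t 0 i • (m (X', w)) i := by
              rw [hsum (t 0) (m (X', w)), hma, hmb, h10a, h10b, one_smul, one_smul]
              have hrw : (∑ i : ι', t 0 i.1 • (m (X', w)) i.1)
                  = ∑ i : ι', t 0 i.1 • X' i :=
                Finset.sum_congr rfl (fun i _ => by rw [hmi])
              rw [hrw, hx]
              abel
            rw [heq]
            exact hc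
          have hcast : Nat.card {w : V × V // P (m (X', w))}
              ≤ Nat.card {w : V × V // Bp w.1 ∧ Bp w.2 ∧ Bp (x + (w.1 + w.2))} :=
            Nat.card_le_card_of_injective (Subtype.impEmbedding _ _ himp)
              (Subtype.impEmbedding _ _ himp).injective
          exact Nat.cast_le.mpr hcast
        · rw [if_neg hGX]
          have : IsEmpty {w : V × V // P (m (X', w))} := by
            constructor
            intro z
            apply hGX
            obtain ⟨w, hw⟩ := z
            constructor
            · intro i
              have := hw.1 i.1
              rwa [hmi] at this
            · intro s
              have hc := hw.2 (Fin.succ s)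
              have hz0 : (0 : Fin (r+1)) < Fin.succ s := Fin.succ_pos s
              have ht0a : t (Fin.succ s) a = 0 := by rw [ha]; exact (h0 0 (Fin.succ s) hz0).1
              have ht0b : t (Fin.succ s) b = 0 := by rw [hb]; exact (h0 0 (Fin.succ s) hz0).2
              have heq : y + ∑ i, t (Fin.succ s) i • (m (X', w)) i
                  = y + ∑ i : ι', t (Fin.succ s) i.1 • X' i := by
                rw [hsum (t (Fin.succ s)) (m (X', w)), ht0a, ht0b,
                  zero_smul, zero_smul]
                have hrw : (∑ i : ι', t (Fin.succ s) i.1 • (m (X', w)) i.1)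
                    = ∑ i : ι', t (Fin.succ s) i.1 • X' i :=
                  Finset.sum_congr rfl (fun i _ => by rw [hmi])
                rw [hrw]
                abel
              rw [heq] at hc
              exact hc
          rw [Nat.card_of_isEmpty]
          norm_num
      -- step 3: the IH bound for the filtered count
      have hcard2 : Fintype.card ι' + 2 = Fintype.card ι := by
        have hbmem : b ∈ univ.erase a := Finset.mem_erase.2 ⟨hba, Finset.mem_univ b⟩
        have h1' : (univ.erase a).card = Fintype.card ι - 1 := by
          rw [Finset.card_erase_of_mem (Finset.mem_univ a), Finset.card_univ]
        have h2' : ((univ.erase a).erase b).card = (univ.erase a).card - 1 :=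
          Finset.card_erase_of_mem hbmem
        have h3' : Fintype.card ι' = ((univ.erase a).erase b).card := by
          rw [Fintype.card_subtype]
          congr 1
          ext x
          rw [Finset.mem_filter, hmemsub x]
          simp
        have h4' : 1 ≤ (univ.erase a).card := Finset.card_pos.2 ⟨b, hbmem⟩
        have h5' : 1 ≤ Fintype.card ι := Fintype.card_pos_iff.2 ⟨a⟩
        have h6' : (univ.erase a).card < Fintype.card ι := by omega
        omega
      have hIH := IH ι' inferInstance inferInstance
        (fun s (i : ι') => t (Fin.succ s) i.1)
        (fun s => ⟨α (Fin.succ s), (hd 0 (Fin.succ s) (Fin.succ_pos s)).1,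
                    (hd 0 (Fin.succ s) (Fin.succ_pos s)).2.1⟩)
        (fun s => ⟨β (Fin.succ s), (hd 0 (Fin.succ s) (Fin.succ_pos s)).2.2.1,
                    (hd 0 (Fin.succ s) (Fin.succ_pos s)).2.2.2⟩)
        (fun s h => hab (Fin.succ s) (congrArg Subtype.val h))
        (fun s s' hss => by
          have := hd (Fin.succ s) (Fin.succ s') (Fin.succ_lt_succ_iff.2 hss)
          exact ⟨fun hcontr => this.1 (congrArg Subtype.val hcontr),
            fun hcontr => this.2.1 (congrArg Subtype.val hcontr),
            fun hcontr => this.2.2.1 (congrArg Subtype.val hcontr),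
            fun hcontr => this.2.2.2 (congrArg Subtype.val hcontr)⟩)
        (fun s => h1 (Fin.succ s))
        (fun s s' hss => h0 (Fin.succ s) (Fin.succ s') (Fin.succ_lt_succ_iff.2 hss))
        y
      have hfiltG : ((univ.filter G).card : ℝ)
          ≤ η ^ r * (Nat.card {w : V // Bp w} : ℝ) ^ (Fintype.card ι') := by
        refine le_trans ?_ hIH
        apply le_of_eq
        norm_cast
        rw [Nat.card_eq_fintype_card, Fintype.card_subtype]
      -- combine
      have hMnn : (0:ℝ) ≤ (Nat.card {w : V // Bp w} : ℝ) := Nat.cast_nonneg _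
      calc ((Nat.card {X : ι → V // P X}) : ℝ)
          = ∑ X' : ι' → V, (Nat.card {w : V × V // P (m (X', w))} : ℝ) := by
            rw [step1]; push_cast; rfl
        _ ≤ ∑ X' : ι' → V,
              (if G X' then η * (Nat.card {w : V // Bp w} : ℝ) ^ 2 else 0) :=
            Finset.sum_le_sum (fun X' _ => step2 X')
        _ = ((univ.filter G).card : ℝ) * (η * (Nat.card {w : V // Bp w} : ℝ) ^ 2) := by
            rw [Finset.sum_ite, Finset.sum_const, Finset.sum_const_zero, add_zero,
              nsmul_eq_mul]
        _ ≤ (η ^ r * (Nat.card {w : V // Bp w} : ℝ) ^ (Fintype.card ι'))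
              * (η * (Nat.card {w : V // Bp w} : ℝ) ^ 2) := by
            apply mul_le_mul_of_nonneg_right hfiltG
            positivity
        _ = η ^ (r+1) * (Nat.card {w : V // Bp w} : ℝ) ^ (Fintype.card ι) := by
            rw [← hcard2, pow_succ, pow_add]
            ring


/-- Claim 4.2: assume that for all `n ≥ n₀` and every `x ∈ 𝔽₂ⁿ`, two independent uniform
samples `w₁, w₂` from `B_n(0,p)` satisfy `Pr[w₁ + w₂ ∈ B_n(x,p)] ≤ 2^(-δ_p n)`.  Then
for all `n ≥ n₀`, positive integers `ℓ, L` with `L + 1 ≤ 2^ℓ` and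
`d := ⌊(1/2) log₂ (L/2) - (1/2) log₂ ℓ⌋ ≥ 1`, and every `S ⊆ 𝔽₂^ℓ` with `|S| = L + 1`:
if `X₁, …, X_ℓ` are picked independently and uniformly from `B_n(0,p)` and
`X_v = ∑ i, v i • X i`, then `Pr[∀ v ∈ S, X_v ∈ B_n(0,p)] ≤ 2ⁿ · 2^(-δ_p d n)`.
All probabilities are expressed as counting ratios. -/
theorem chain_event_bound (p : ℝ) (hp0 : 0 < p) (hp1 : p < 1 / 2)
    (δp : ℝ) (hδp : 0 < δp) (n₀ : ℕ)
    (hpair : ∀ n : ℕ, n₀ ≤ n → ∀ x : Fin n → ZMod 2,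
      ((Nat.card {w : (Fin n → ZMod 2) × (Fin n → ZMod 2) //
            (hammingNorm w.1 : ℝ) ≤ p * n ∧ (hammingNorm w.2 : ℝ) ≤ p * n ∧
            (hammingDist x (w.1 + w.2) : ℝ) ≤ p * n} : ℝ) /
          (Nat.card {w : Fin n → ZMod 2 // (hammingNorm w : ℝ) ≤ p * n} : ℝ) ^ 2)
        ≤ (2 : ℝ) ^ (-(δp * n))) :
    ∀ n : ℕ, n₀ ≤ n → ∀ ℓ L : ℕ, 0 < ℓ → 0 < L → L + 1 ≤ 2 ^ ℓ →
      ∀ d : ℤ, d = ⌊(1 / 2 : ℝ) * Real.logb 2 ((L : ℝ) / 2) -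
          (1 / 2 : ℝ) * Real.logb 2 (ℓ : ℝ)⌋ → 1 ≤ d →
      ∀ S : Finset (Fin ℓ → ZMod 2), S.card = L + 1 →
        ((Nat.card {X : Fin ℓ → (Fin n → ZMod 2) //
              (∀ i, (hammingNorm (X i) : ℝ) ≤ p * n) ∧
              ∀ v ∈ S, (hammingNorm (∑ i, v i • X i) : ℝ) ≤ p * n} : ℝ) /
            (Nat.card {w : Fin n → ZMod 2 // (hammingNorm w : ℝ) ≤ p * n} : ℝ) ^ ℓ)
          ≤ (2 : ℝ) ^ (n : ℕ) * (2 : ℝ) ^ (-(δp * (d : ℝ) * n)) := by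
  classical
  intro n hn ℓ L hℓ hL hLle d hdfloor hd1 S hScard
  set V := Fin n → ZMod 2 with hV
  set Bp : V → Prop := fun w => (hammingNorm w : ℝ) ≤ p * n with hBp
  set M : ℕ := Nat.card {w : V // Bp w} with hM
  set η : ℝ := (2 : ℝ) ^ (-(δp * n)) with hη
  have hηnn : 0 ≤ η := le_of_lt (Real.rpow_pos_of_pos (by norm_num) _)
  -- the ball is nonempty
  have hBp0 : Bp 0 := by
    show ((hammingNorm (0 : V) : ℝ)) ≤ p * n
    rw [hammingNorm_zero]
    push_cast
    positivity
  have hMpos : 0 < M := Nat.card_pos_iff.2 ⟨⟨⟨0, hBp0⟩⟩, inferInstance⟩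
  have hMRpos : (0 : ℝ) < (M : ℝ) := by exact_mod_cast hMpos
  -- char-two facts
  have hvv : ∀ v : V, v + v = 0 := fun v => by
    rw [← two_smul (ZMod 2) v, show (2 : ZMod 2) = 0 from rfl, zero_smul]
  have hsubadd : ∀ x z : V, x - z = x + z := fun x z => by
    funext i
    rw [Pi.sub_apply, Pi.add_apply, CharTwo.sub_eq_add]
  -- pair hypothesis, multiplied out and rewritten
  have hp2 : ∀ x : V,
      ((Nat.card {w : V × V // Bp w.1 ∧ Bp w.2 ∧ Bp (x + (w.1 + w.2))} : ℝ))
        ≤ η * (M : ℝ) ^ 2 := by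
    intro x
    have hiff : ∀ w : V × V,
        (Bp w.1 ∧ Bp w.2 ∧ Bp (x + (w.1 + w.2))) ↔
        ((hammingNorm w.1 : ℝ) ≤ p * n ∧ (hammingNorm w.2 : ℝ) ≤ p * n ∧
          (hammingDist x (w.1 + w.2) : ℝ) ≤ p * n) := by
      intro w
      have : hammingDist x (w.1 + w.2) = hammingNorm (x + (w.1 + w.2)) := by
        rw [hammingDist_eq_hammingNorm, neg_eq_of_add_eq_zero_right (hvv x)]
      constructor
      · rintro ⟨h1, h2, h3⟩; exact ⟨h1, h2, by rw [this]; exact h3⟩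
      · rintro ⟨h1, h2, h3⟩; exact ⟨h1, h2, by show _ ≤ _; rw [← this]; exact h3⟩
    rw [Nat.card_congr (Equiv.subtypeEquivRight hiff)]
    have hdiv := hpair n hn x
    rw [div_le_iff₀ (by positivity)] at hdiv
    calc ((Nat.card _ : ℝ)) ≤ (2:ℝ) ^ (-(δp * n)) * (M:ℝ) ^ 2 := hdiv
      _ = η * (M : ℝ) ^ 2 := by rw [hη]
  -- derive the cardinality bound L ≥ 2ℓ4^d
  set dn : ℕ := d.toNat with hdn
  have hdn1 : 1 ≤ dn := by omega
  have hdreal : ((d : ℝ)) ≤ (1 / 2 : ℝ) * Real.logb 2 ((L : ℝ) / 2) -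
      (1 / 2 : ℝ) * Real.logb 2 (ℓ : ℝ) := by
    rw [hdfloor]
    exact Int.floor_le _
  have hℓR : (0 : ℝ) < (ℓ : ℝ) := by exact_mod_cast hℓ
  have hLR : (0 : ℝ) < (L : ℝ) := by exact_mod_cast hL
  have hz : (0 : ℝ) < (L : ℝ) / (2 * ℓ) := by positivity
  have hlogz : Real.logb 2 ((L : ℝ) / (2 * ℓ))
      = Real.logb 2 ((L : ℝ) / 2) - Real.logb 2 (ℓ : ℝ) := by
    rw [show (L : ℝ) / (2 * ℓ) = ((L : ℝ) / 2) / (ℓ : ℝ) by ring]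
    exact Real.logb_div (by positivity) (by positivity)
  have h2d : (2 : ℝ) * (d : ℝ) ≤ Real.logb 2 ((L : ℝ) / (2 * ℓ)) := by
    rw [hlogz]; linarith
  have hpow : (2 : ℝ) ^ ((2 : ℝ) * (d : ℝ)) ≤ (L : ℝ) / (2 * ℓ) := by
    calc (2 : ℝ) ^ ((2 : ℝ) * (d : ℝ))
        ≤ (2 : ℝ) ^ (Real.logb 2 ((L : ℝ) / (2 * ℓ))) :=
          Real.rpow_le_rpow_of_exponent_le (by norm_num) h2d
      _ = (L : ℝ) / (2 * ℓ) := Real.rpow_logb (by norm_num) (by norm_num) hz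
  have hdnr : ((dn : ℝ)) = (d : ℝ) := by
    rw [hdn]
    exact_mod_cast congrArg (Int.cast : ℤ → ℝ) (Int.toNat_of_nonneg (by omega))
  have hpow' : ((2 * ℓ * 4 ^ dn : ℕ) : ℝ) ≤ (L : ℝ) := by
    push_cast
    have h4 : ((4 : ℝ)) ^ dn = (2 : ℝ) ^ ((2 : ℝ) * (d : ℝ)) := by
      rw [← hdnr]
      rw [show ((2 : ℝ) * (dn : ℝ)) = ((2 * dn : ℕ) : ℝ) by push_cast; ring]
      rw [Real.rpow_natCast]
      rw [pow_mul]
      norm_num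
    rw [h4]
    rw [le_div_iff₀ (by positivity)] at hpow
    linarith [hpow]
  have hLge : 2 * ℓ * 4 ^ dn ≤ L := by exact_mod_cast hpow'
  have hexcard : ((Finset.univ : Finset (Fin ℓ)).card + 1) * 4 ^ dn + 1 ≤ S.card := by
    rw [Finset.card_univ, Fintype.card_fin, hScard]
    have h1 : (ℓ + 1) * 4 ^ dn ≤ 2 * ℓ * 4 ^ dn := by
      apply Nat.mul_le_mul_right
      omega
    omega
  -- extraction
  obtain ⟨s0, hs0S, w, α, β, hwS, _hABmem, hαβ, hpairs, hflip, hagree⟩ :=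
    extract dn Finset.univ S (fun v _ u _ h => funext (fun i => h i (mem_univ i))) hexcard
  set t : Fin dn → Fin ℓ → ZMod 2 := fun k i => s0 i + w k i with ht
  have hzmod_ne : ∀ x y : ZMod 2, x ≠ y → y + x = 1 := by decide
  have hzmod_eq : ∀ x y : ZMod 2, x = y → y + x = 0 := by decide
  have ht1 : ∀ k, t k (α k) = 1 ∧ t k (β k) = 1 := fun k =>
    ⟨hzmod_ne _ _ (hflip k).1, hzmod_ne _ _ (hflip k).2⟩
  have ht0 : ∀ k k' : Fin dn, k < k' → t k' (α k) = 0 ∧ t k' (β k) = 0 := fun k k' h =>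
    ⟨hzmod_eq _ _ (hagree k k' h).1, hzmod_eq _ _ (hagree k k' h).2⟩
  -- the event with constraints from S implies the chain constraints
  set Q : V → (Fin ℓ → V) → Prop := fun y X =>
    (∀ i, Bp (X i)) ∧ ∀ s : Fin dn, Bp (y + ∑ i, t s i • X i) with hQ
  have hkey : ∀ (X : Fin ℓ → V) (k : Fin dn),
      (∑ i, s0 i • X i) + ∑ i, t k i • X i = ∑ i, w k i • X i := by
    intro X k
    rw [← Finset.sum_add_distrib]
    apply Finset.sum_congr rfl
    intro i _
    rw [show t k i = s0 i + w k i from rfl, add_smul, ← add_assoc, hvv, zero_add]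
  -- injection into the sigma type
  have hinj : Nat.card {X : Fin ℓ → V //
        (∀ i, Bp (X i)) ∧ ∀ v ∈ S, (hammingNorm (∑ i, v i • X i) : ℝ) ≤ p * n}
      ≤ Nat.card (Σ y : V, {X : Fin ℓ → V // Q y X}) := by
    apply Nat.card_le_card_of_injective
      (fun z => ⟨∑ i, s0 i • z.1 i, z.1, by
        refine ⟨z.2.1, ?_⟩
        intro s
        rw [hkey z.1 s]
        exact z.2.2 (w s) (hwS s)⟩)
    intro z1 z2 h
    have := congrArg (fun q : (Σ y : V, {X : Fin ℓ → V // Q y X}) => q.2.1) h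
    exact Subtype.ext this
  have hsigma : (Nat.card (Σ y : V, {X : Fin ℓ → V // Q y X}) : ℝ)
      ≤ (2:ℝ)^(n:ℕ) * (η ^ dn * (M:ℝ) ^ ℓ) := by
    rw [Nat.card_eq_fintype_card, Fintype.card_sigma]
    push_cast
    calc (∑ y : V, (Fintype.card {X : Fin ℓ → V // Q y X} : ℝ))
        ≤ ∑ _y : V, (η ^ dn * (M:ℝ) ^ ℓ) := by
          apply Finset.sum_le_sum
          intro y _
          rw [← Nat.card_eq_fintype_card, hM]
          have h := peel Bp η hηnn hp2 dn (Fin ℓ) inferInstance inferInstance t α β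
            hαβ hpairs ht1 ht0 y
          rwa [Fintype.card_fin] at h
      _ = (2:ℝ)^(n:ℕ) * (η ^ dn * (M:ℝ) ^ ℓ) := by
          rw [Finset.sum_const, Finset.card_univ, nsmul_eq_mul]
          have hcV : Fintype.card V = 2 ^ n := by
            show Fintype.card (Fin n → ZMod 2) = 2 ^ n
            rw [Fintype.card_fun, ZMod.card, Fintype.card_fin]
          rw [hcV]
          push_cast
          ring
  -- finish
  have hη_dn : η ^ dn = (2:ℝ) ^ (-(δp * (d:ℝ) * n)) := by
    rw [hη, ← Real.rpow_natCast ((2:ℝ) ^ (-(δp * n))) dn, ← Real.rpow_mul (by norm_num)]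
    congr 1
    rw [hdnr]
    ring
  rw [div_le_iff₀ (by positivity)]
  calc ((Nat.card {X : Fin ℓ → V //
        (∀ i, Bp (X i)) ∧ ∀ v ∈ S, (hammingNorm (∑ i, v i • X i) : ℝ) ≤ p * n} : ℝ))
      ≤ (Nat.card (Σ y : V, {X : Fin ℓ → V // Q y X}) : ℝ) := by exact_mod_cast hinj
    _ ≤ (2:ℝ)^(n:ℕ) * (η ^ dn * (M:ℝ) ^ ℓ) := hsigma
    _ = (2:ℝ)^(n:ℕ) * (2:ℝ) ^ (-(δp * (d:ℝ) * n)) * (M:ℝ) ^ ℓ := by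
        rw [hη_dn]; ring
end
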